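/- Let d, p₀ > 0 and let u : [0,T] × [−h₀,h₀] → ℝ be continuous with continuous time derivative, satisfying u_t(t,x) ≥ d ∫_{−h₀}^{h₀} J(x−y) u(t,y) dy − d u(t,x) + c(t,x) u(t,x) for a bounded measurable c, and u(0,x) ≥ 0 for all x ∈ [−h₀,h₀]. Then u(t,x) ≥ 0 for all (t,x) ∈ [0,T] × [−h₀,h₀]. -/

import Mathlib

open Real Set MeasureTheory

set_option maxHeartbeats 1000000 in
theorem nonlocal_maximum_principle (J : ℝ → ℝ)
    (hJcont : Continuous J) (hJnonneg : ∀ x, 0 ≤ J x)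
    (hJ0 : 0 < J 0) (hJsymm : ∀ x, J (-x) = J x) (hJint : ∫ x, J x = 1)
    (d p₀ T h₀ : ℝ) (hd : 0 < d) (hp₀ : 0 < p₀) (hT : 0 < T) (hh₀ : 0 < h₀)
    (u ut c : ℝ → ℝ → ℝ)
    (hu_cont : ContinuousOn (fun p : ℝ × ℝ => u p.1 p.2) (Icc 0 T ×ˢ Icc (-h₀) h₀))
    (hut_cont : ContinuousOn (fun p : ℝ × ℝ => ut p.1 p.2) (Icc 0 T ×ˢ Icc (-h₀) h₀))
    (hderiv : ∀ t ∈ Icc (0:ℝ) T, ∀ x ∈ Icc (-h₀) h₀, HasDerivAt (fun s => u s x) (ut t x) t)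
    (hc_bdd : ∃ C : ℝ, ∀ t ∈ Icc (0:ℝ) T, ∀ x ∈ Icc (-h₀) h₀, |c t x| ≤ C)
    (hineq : ∀ t ∈ Icc (0:ℝ) T, ∀ x ∈ Icc (-h₀) h₀,
      d * (∫ y in (-h₀)..h₀, J (x - y) * u t y) - d * u t x + c t x * u t x ≤ ut t x)
    (hinit : ∀ x ∈ Icc (-h₀) h₀, 0 ≤ u 0 x) :
    ∀ t ∈ Icc (0:ℝ) T, ∀ x ∈ Icc (-h₀) h₀, 0 ≤ u t x := by
  obtain ⟨C, hC⟩ := hc_bdd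
  set k : ℝ := C + 1 with hk
  -- the auxiliary function w
  set w : ℝ × ℝ → ℝ := fun p => rexp (-(k * p.1)) * u p.1 p.2 with hw
  have hK : IsCompact (Icc (0:ℝ) T ×ˢ Icc (-h₀) h₀) := isCompact_Icc.prod isCompact_Icc
  have hKne : (Icc (0:ℝ) T ×ˢ Icc (-h₀) h₀).Nonempty :=
    ⟨(0, 0), Set.mk_mem_prod (Set.mem_Icc.2 ⟨le_refl 0, hT.le⟩)
      (Set.mem_Icc.2 ⟨by linarith, hh₀.le⟩)⟩
  have hwcont : ContinuousOn w (Icc (0:ℝ) T ×ˢ Icc (-h₀) h₀) :=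
    (Continuous.continuousOn (by fun_prop)).mul hu_cont
  obtain ⟨⟨t₀, x₀⟩, hmem, hmin⟩ := hK.exists_isMinOn hKne hwcont
  have ht₀ : t₀ ∈ Icc (0:ℝ) T := hmem.1
  have hx₀ : x₀ ∈ Icc (-h₀) h₀ := hmem.2
  -- it suffices to show the minimum of w is nonnegative
  by_contra hcon
  push_neg at hcon
  obtain ⟨t₁, ht₁, x₁, hx₁, hneg⟩ := hcon
  have hwneg : w (t₀, x₀) < 0 := by
    have := hmin (Set.mk_mem_prod ht₁ hx₁)
    have h1 : w (t₁, x₁) < 0 :=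
      mul_neg_of_pos_of_neg (exp_pos _) hneg
    exact lt_of_le_of_lt this h1
  have huneg : u t₀ x₀ < 0 := by
    by_contra hn
    push_neg at hn
    have : (0:ℝ) ≤ w (t₀, x₀) := mul_nonneg (exp_pos _).le hn
    linarith
  -- t₀ > 0
  have ht₀pos : 0 < t₀ := by
    rcases lt_or_eq_of_le ht₀.1 with h | h
    · exact h
    · exfalso; exact absurd (hinit x₀ hx₀) (by rw [← h] at huneg; linarith)
  -- u t₀ · attains its min over the rod at x₀
  have humin : ∀ y ∈ Icc (-h₀) h₀, u t₀ x₀ ≤ u t₀ y := by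
    intro y hy
    have := hmin (Set.mk_mem_prod ht₀ hy)
    have he : 0 < rexp (-(k * t₀)) := exp_pos _
    simp only [hw] at this
    exact le_of_mul_le_mul_left this he
  -- continuity of u t₀ · on the rod
  have hucont_t : ContinuousOn (fun y => u t₀ y) (Icc (-h₀) h₀) := by
    have : ContinuousOn ((fun p : ℝ × ℝ => u p.1 p.2) ∘ fun y => (t₀, y)) (Icc (-h₀) h₀) :=
      hu_cont.comp (Continuous.continuousOn (by fun_prop))
        (fun y hy => Set.mk_mem_prod ht₀ hy)
    exact this
  -- J is integrable
  have hJinteg : Integrable J := by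
    by_contra h
    rw [integral_undef h] at hJint
    norm_num at hJint
  have hJx : Integrable (fun y => J (x₀ - y)) := hJinteg.comp_sub_left x₀
  -- the kernel integral is at most 1
  have hker_le : (∫ y in (-h₀)..h₀, J (x₀ - y)) ≤ 1 := by
    rw [intervalIntegral.integral_of_le (by linarith)]
    calc (∫ y in Set.Ioc (-h₀) h₀, J (x₀ - y))
        ≤ ∫ y, J (x₀ - y) :=
          setIntegral_le_integral hJx (Filter.Eventually.of_forall fun y => hJnonneg _)
      _ = ∫ y, J y := integral_sub_left_eq_self J volume x₀
      _ = 1 := hJint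
  have hker_nonneg : 0 ≤ (∫ y in (-h₀)..h₀, J (x₀ - y)) :=
    intervalIntegral.integral_nonneg (by linarith) (fun y _ => hJnonneg _)
  -- integrability of integrands on the interval
  have hii1 : IntervalIntegrable (fun y => J (x₀ - y) * u t₀ y) volume (-h₀) h₀ := by
    apply ContinuousOn.intervalIntegrable
    rw [Set.uIcc_of_le (by linarith)]
    exact ((hJcont.comp (continuous_const.sub continuous_id)).continuousOn).mul hucont_t
  have hii2 : IntervalIntegrable (fun y => J (x₀ - y) * u t₀ x₀) volume (-h₀) h₀ := by
    apply ContinuousOn.intervalIntegrable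
    rw [Set.uIcc_of_le (by linarith)]
    exact Continuous.continuousOn (by fun_prop)
  -- lower bound for the nonlocal term
  have hIbound : u t₀ x₀ ≤ ∫ y in (-h₀)..h₀, J (x₀ - y) * u t₀ y := by
    have h1 : (∫ y in (-h₀)..h₀, J (x₀ - y) * u t₀ x₀)
        ≤ ∫ y in (-h₀)..h₀, J (x₀ - y) * u t₀ y := by
      apply intervalIntegral.integral_mono_on (by linarith) hii2 hii1
      intro y hy
      exact mul_le_mul_of_nonneg_left (humin y hy) (hJnonneg _)
    have h2 : (∫ y in (-h₀)..h₀, J (x₀ - y) * u t₀ x₀)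
        = (∫ y in (-h₀)..h₀, J (x₀ - y)) * u t₀ x₀ :=
      intervalIntegral.integral_mul_const _ _
    nlinarith [h1, h2]
  -- time derivative of w at (t₀, x₀)
  set f : ℝ → ℝ := fun s => rexp (-(k * s)) * u s x₀ with hf
  have hfd : HasDerivAt f
      (rexp (-(k * t₀)) * (-k) * u t₀ x₀ + rexp (-(k * t₀)) * ut t₀ x₀) t₀ := by
    have h1 : HasDerivAt (fun s : ℝ => rexp (-(k * s))) (rexp (-(k * t₀)) * (-k)) t₀ := by
      have : HasDerivAt (fun s : ℝ => -(k * s)) (-k) t₀ := by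
        exact (((hasDerivAt_id' t₀).const_mul k).neg).congr_deriv (by ring)
      exact this.exp
    exact h1.mul (hderiv t₀ ht₀ x₀ hx₀)
  -- one-sided minimum implies nonpositive derivative
  have hf'le : rexp (-(k * t₀)) * (-k) * u t₀ x₀ + rexp (-(k * t₀)) * ut t₀ x₀ ≤ 0 := by
    have hslope := hasDerivAt_iff_tendsto_slope.1 hfd
    have hsl : Filter.Tendsto (slope f t₀) (nhdsWithin t₀ (Set.Iio t₀)) (nhds
        (rexp (-(k * t₀)) * (-k) * u t₀ x₀ + rexp (-(k * t₀)) * ut t₀ x₀)) :=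
      hslope.mono_left (nhdsWithin_mono _ fun y hy => ne_of_lt hy)
    refine le_of_tendsto hsl ?_
    filter_upwards [Ioo_mem_nhdsLT_of_mem (Set.mem_Ioc.2 ⟨ht₀pos, le_refl t₀⟩)] with s hs
    have hsIcc : s ∈ Icc (0:ℝ) T := ⟨hs.1.le, hs.2.le.trans ht₀.2⟩
    have hfs' : w (t₀, x₀) ≤ w (s, x₀) := hmin (Set.mk_mem_prod hsIcc hx₀)
    have hfs : f t₀ ≤ f s := hfs'
    rw [slope_def_field]
    rw [div_eq_inv_mul]
    apply mul_nonpos_of_nonpos_of_nonneg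
    · exact inv_nonpos.2 (by linarith [hs.2])
    · linarith
  -- the differential inequality at (t₀, x₀)
  have hineq0 := hineq t₀ ht₀ x₀ hx₀
  have hcb := hC t₀ ht₀ x₀ hx₀
  have hcle : c t₀ x₀ ≤ C := le_of_abs_le hcb
  have he : 0 < rexp (-(k * t₀)) := exp_pos _
  -- derive the contradiction
  have h1 : ut t₀ x₀ ≤ k * u t₀ x₀ := by
    nlinarith [hf'le]
  have h2 : c t₀ x₀ * u t₀ x₀ ≤ ut t₀ x₀ := by
    nlinarith [hIbound]
  nlinarith [h1, h2, hcle, huneg]
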